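/- arXiv:1710.01554 — 2 statements merged into one kernel-verified Lean document; each statement's English description precedes it below -/
import Mathlib

section
/- Assume g satisfies conditions (A1)–(A3) on (a,b), let F be the distribution function with density p(y) = c₁ e^{−G(y)} on (a,b), and for z ∈ (a,b) let f_z be the Stein solution defined by f_z(w) = F(w)(1 − F(z))/p(w) for w ≤ z and f_z(w) = F(z)(1 − F(w))/p(w) for w > z. Then F(z) − 1 ≤ g(w) f_z(w) ≤ F(z) for all w ∈ (a,b); in particular |g(w) f_z(w)| ≤ 1 for all w ∈ (a,b). -/
open MeasureTheory Filter Set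

/-- The open interval `(a, b) ⊆ ℝ` determined by extended-real endpoints. -/
def strip (a b : EReal) : Set ℝ := {x : ℝ | a < (x : EReal) ∧ (x : EReal) < b}

/-- The density `p(y) = c₁ e^{-G(y)}`, `G(y) = ∫_{w₀}^y g`. -/
noncomputable def steinPdf (g : ℝ → ℝ) (w₀ c₁ : ℝ) (y : ℝ) : ℝ :=
  c₁ * Real.exp (-(∫ t in w₀..y, g t))

/-- The distribution function `F` with density `p` on `(a, b)`. -/
noncomputable def steinCDF (g : ℝ → ℝ) (a b : EReal) (w₀ c₁ : ℝ) (w : ℝ) : ℝ :=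
  ∫ y in strip a b ∩ Set.Iic w, steinPdf g w₀ c₁ y

/-- The Stein solution `f_z`: `f_z(w) = F(w)(1-F(z))/p(w)` for `w ≤ z`, and
`f_z(w) = F(z)(1-F(w))/p(w)` for `w > z`. -/
noncomputable def steinSol (g : ℝ → ℝ) (a b : EReal) (w₀ c₁ : ℝ) (z w : ℝ) : ℝ :=
  if w ≤ z then steinCDF g a b w₀ c₁ w * (1 - steinCDF g a b w₀ c₁ z) / steinPdf g w₀ c₁ w
  else steinCDF g a b w₀ c₁ z * (1 - steinCDF g a b w₀ c₁ w) / steinPdf g w₀ c₁ w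


open scoped ENNReal

namespace SteinAux

variable {a b : EReal} {g : ℝ → ℝ} {w₀ c₁ : ℝ}

variable {a b : EReal} {g : ℝ → ℝ} {w₀ c₁ : ℝ}

lemma isOpen_strip : IsOpen (strip a b) := by
  have : strip a b = ((fun x : ℝ => (x : EReal)) ⁻¹' (Set.Ioi a)) ∩
      ((fun x : ℝ => (x : EReal)) ⁻¹' (Set.Iio b)) := rfl
  rw [this]
  exact (isOpen_Ioi.preimage continuous_coe_real_ereal).inter
    (isOpen_Iio.preimage continuous_coe_real_ereal)

lemma measurableSet_strip : MeasurableSet (strip a b) :=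
  (isOpen_strip).measurableSet

lemma mem_strip_of_le {u v x : ℝ} (hu : u ∈ strip a b) (hv : v ∈ strip a b)
    (h1 : u ≤ x) (h2 : x ≤ v) : x ∈ strip a b :=
  ⟨lt_of_lt_of_le hu.1 (EReal.coe_le_coe_iff.2 h1),
   lt_of_le_of_lt (EReal.coe_le_coe_iff.2 h2) hv.2⟩

lemma uIcc_subset_strip {u v : ℝ} (hu : u ∈ strip a b) (hv : v ∈ strip a b) :
    Set.uIcc u v ⊆ strip a b := by
  intro x hx
  rcases le_total u v with h | h
  · rw [Set.uIcc_of_le h] at hx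
    exact mem_strip_of_le hu hv hx.1 hx.2
  · rw [Set.uIcc_of_ge h] at hx
    exact mem_strip_of_le hv hu hx.1 hx.2

lemma pdf_pos (hc₁ : 0 < c₁) (y : ℝ) : 0 < steinPdf g w₀ c₁ y :=
  mul_pos hc₁ (Real.exp_pos _)

lemma pdf_contOn (hg_cont : ContinuousOn g (strip a b)) (hw₀ : w₀ ∈ strip a b) :
    ContinuousOn (steinPdf g w₀ c₁) (strip a b) := by
  have : ContinuousOn (fun y => ∫ t in w₀..y, g t) (strip a b) := by
    intro y hy
    have hInt : IntervalIntegrable g MeasureTheory.volume w₀ y :=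
      (hg_cont.mono (uIcc_subset_strip hw₀ hy)).intervalIntegrable
    have := intervalIntegral.integral_hasDerivAt_right hInt
      (ContinuousOn.stronglyMeasurableAtFilter isOpen_strip hg_cont y hy)
      (hg_cont.continuousAt (isOpen_strip.mem_nhds hy))
    exact this.continuousAt.continuousWithinAt
  exact continuousOn_const.mul (this.neg.rexp)

lemma hasDerivAt_neg_pdf (hg_cont : ContinuousOn g (strip a b)) (hw₀ : w₀ ∈ strip a b)
    {y : ℝ} (hy : y ∈ strip a b) :
    HasDerivAt (fun x => -steinPdf g w₀ c₁ x) (g y * steinPdf g w₀ c₁ y) y := by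
  have hInt : IntervalIntegrable g MeasureTheory.volume w₀ y :=
    (hg_cont.mono (uIcc_subset_strip hw₀ hy)).intervalIntegrable
  have hG : HasDerivAt (fun u => ∫ t in w₀..u, g t) (g y) y :=
    intervalIntegral.integral_hasDerivAt_right hInt
      (ContinuousOn.stronglyMeasurableAtFilter isOpen_strip hg_cont y hy)
      (hg_cont.continuousAt (isOpen_strip.mem_nhds hy))
  have h1 : HasDerivAt (fun u => Real.exp (-(∫ t in w₀..u, g t)))
      (Real.exp (-(∫ t in w₀..y, g t)) * (-(g y))) y := (hG.neg).exp
  have h2 := (h1.const_mul c₁).neg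
  have heq : g y * steinPdf g w₀ c₁ y = -(c₁ * (Real.exp (-(∫ t in w₀..y, g t)) * -g y)) := by
    simp [steinPdf]; ring
  rw [heq]
  exact h2

lemma integral_q (hg_cont : ContinuousOn g (strip a b)) (hw₀ : w₀ ∈ strip a b)
    {u v : ℝ} (hu : u ∈ strip a b) (hv : v ∈ strip a b) :
    ∫ t in u..v, g t * steinPdf g w₀ c₁ t = steinPdf g w₀ c₁ u - steinPdf g w₀ c₁ v := by
  have h := intervalIntegral.integral_eq_sub_of_hasDerivAt
    (f := fun x => -steinPdf g w₀ c₁ x) (f' := fun t => g t * steinPdf g w₀ c₁ t)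
    (fun t ht => hasDerivAt_neg_pdf hg_cont hw₀ (uIcc_subset_strip hu hv ht))
    (((hg_cont.mono (uIcc_subset_strip hu hv)).mul
      ((pdf_contOn hg_cont hw₀).mono (uIcc_subset_strip hu hv))).intervalIntegrable)
  rw [h]; ring


lemma exhaust_bound {s : Set ℝ} (hs : MeasurableSet s) {h : ℝ → ℝ}
    (hmeas : AEMeasurable h (MeasureTheory.volume.restrict s))
    (hpos : ∀ᵐ y ∂(MeasureTheory.volume.restrict s), 0 ≤ h y)
    {t : ℕ → Set ℝ} (ht : ∀ n, MeasurableSet (t n)) (hmono : Monotone t)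
    (hcover : ∀ x ∈ s, ∃ n, x ∈ t n) {M : ℝ} (hM : 0 ≤ M)
    (hbound : ∀ n, IntegrableOn h (s ∩ t n) ∧ ∫ y in s ∩ t n, h y ≤ M) :
    IntegrableOn h s ∧ ∫ y in s, h y ≤ M := by
  set μ := MeasureTheory.volume.restrict s with hμ
  set f : ℕ → ℝ → ℝ≥0∞ := fun n => (t n).indicator (fun y => ENNReal.ofReal (h y)) with hf
  have hfm : ∀ n, AEMeasurable (f n) μ := fun n =>
    (ENNReal.measurable_ofReal.comp_aemeasurable hmeas).indicator (ht n)
  have hfmono : ∀ᵐ y ∂μ, Monotone fun n => f n y := by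
    filter_upwards with y
    intro m n hmn
    exact Set.indicator_le_indicator_of_subset (hmono hmn) (fun _ => zero_le) y
  have hsup : ∀ᵐ y ∂μ, (⨆ n, f n y) = ENNReal.ofReal (h y) := by
    filter_upwards [MeasureTheory.ae_restrict_mem hs] with y hy
    obtain ⟨n, hn⟩ := hcover y hy
    apply le_antisymm
    · exact iSup_le fun m => Set.indicator_le_self _ _ y
    · refine le_trans ?_ (le_iSup _ n)
      rw [hf]; simp only [Set.indicator_of_mem hn]; exact le_refl _
  have key : ∫⁻ y, ENNReal.ofReal (h y) ∂μ ≤ ENNReal.ofReal M := by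
    rw [← lintegral_congr_ae hsup, lintegral_iSup' hfm hfmono]
    refine iSup_le fun n => ?_
    have h1 : ∫⁻ y, f n y ∂μ = ∫⁻ y in s ∩ t n, ENNReal.ofReal (h y) ∂MeasureTheory.volume := by
      rw [hf]
      rw [lintegral_indicator (ht n), hμ, Measure.restrict_restrict (ht n), Set.inter_comm]
    have h2 : 0 ≤ᵐ[MeasureTheory.volume.restrict (s ∩ t n)] h := by
      refine MeasureTheory.ae_restrict_of_ae_restrict_of_subset Set.inter_subset_left hpos
    rw [h1, ← MeasureTheory.ofReal_integral_eq_lintegral_ofReal (hbound n).1 h2]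
    exact ENNReal.ofReal_le_ofReal (hbound n).2
  have hfin : (∫⁻ y, ENNReal.ofReal (h y) ∂μ) < ⊤ :=
    lt_of_le_of_lt key ENNReal.ofReal_lt_top
  have hint : IntegrableOn h s := by
    refine ⟨hmeas.aestronglyMeasurable, ?_⟩
    rw [MeasureTheory.hasFiniteIntegral_iff_norm]
    have : ∫⁻ y, ENNReal.ofReal ‖h y‖ ∂μ = ∫⁻ y, ENNReal.ofReal (h y) ∂μ := by
      refine lintegral_congr_ae ?_
      filter_upwards [hpos] with y hy
      rw [Real.norm_of_nonneg hy]
    rw [this]; exact hfin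
  refine ⟨hint, ?_⟩
  rw [MeasureTheory.integral_eq_lintegral_of_nonneg_ae hpos hmeas.aestronglyMeasurable]
  calc (∫⁻ y, ENNReal.ofReal (h y) ∂μ).toReal ≤ (ENNReal.ofReal M).toReal := by
        exact ENNReal.toReal_mono ENNReal.ofReal_ne_top key
    _ = M := ENNReal.toReal_ofReal hM

lemma exists_seq_lower {w : ℝ} (hw : w ∈ strip a b) :
    ∃ c : ℕ → ℝ, (∀ n, c n ∈ strip a b ∧ c n < w) ∧
      (∀ x : ℝ, a < (x : EReal) → ∃ n, c n < x) ∧ (∀ m n, m ≤ n → c n ≤ c m) := by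
  by_cases ha : a = ⊥
  · refine ⟨fun n => w - (n + 1), fun n => ⟨⟨?_, ?_⟩, ?_⟩, ?_, ?_⟩
    · rw [ha]; exact EReal.bot_lt_coe _
    · refine lt_trans ?_ hw.2
      exact_mod_cast sub_lt_self w (by positivity)
    · exact sub_lt_self w (by positivity)
    · intro x _
      obtain ⟨n, hn⟩ := exists_nat_gt (w - x)
      exact ⟨n, show w - ((n:ℝ) + 1) < x by linarith⟩
    · intro m n hmn
      have : (m:ℝ) ≤ (n:ℝ) := Nat.cast_le.2 hmn
      show w - ((n:ℝ) + 1) ≤ w - ((m:ℝ) + 1)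
      linarith
  · have ha' : a ≠ ⊤ := ne_top_of_lt hw.1
    set α := a.toReal with hα
    have haα : a = (α : EReal) := (EReal.coe_toReal ha' ha).symm
    have hαw : α < w := by
      rw [haα] at hw; exact_mod_cast hw.1
    have hwα : (0:ℝ) < w - α := by linarith
    refine ⟨fun n => α + (w - α) / (n + 2), fun n => ⟨⟨?_, ?_⟩, ?_⟩, ?_, ?_⟩
    · rw [haα]
      exact_mod_cast lt_add_of_pos_right α (by positivity)
    · refine lt_trans ?_ hw.2
      have : α + (w - α) / (n + 2) < w := by
        have h2 : (w - α) / (n + 2) < w - α :=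
          div_lt_self hwα (by have : (0:ℝ) ≤ (n:ℝ) := Nat.cast_nonneg n; linarith)
        linarith
      exact_mod_cast this
    · have h2 : (w - α) / (n + 2) < w - α :=
        div_lt_self hwα (by have : (0:ℝ) ≤ (n:ℝ) := Nat.cast_nonneg n; linarith)
      linarith
    · intro x hx
      have hαx : α < x := by rw [haα] at hx; exact_mod_cast hx
      rcases le_or_gt w x with h | h
      · refine ⟨0, ?_⟩
        have h2 : (w - α) / (0 + 2) < w - α := div_lt_self hwα (by norm_num)
        push_cast; linarith
      · obtain ⟨n, hn⟩ := exists_nat_gt ((w - α) / (x - α))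
        refine ⟨n, ?_⟩
        have hxα : (0:ℝ) < x - α := by linarith
        have : (w - α) / (n + 2) < x - α := by
          rw [div_lt_iff₀ (by positivity)]
          have := (div_lt_iff₀ hxα).1 hn
          nlinarith [hxα.le]
        linarith
    · intro m n hmn
      have hc : (m:ℝ) + 2 ≤ (n:ℝ) + 2 := by
        have : (m:ℝ) ≤ (n:ℝ) := Nat.cast_le.2 hmn
        linarith
      show α + (w - α) / ((n:ℝ) + 2) ≤ α + (w - α) / ((m:ℝ) + 2)
      have := div_le_div_of_nonneg_left hwα.le (by positivity : (0:ℝ) < (m:ℝ) + 2) hc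
      linarith

lemma exists_seq_upper {w : ℝ} (hw : w ∈ strip a b) :
    ∃ c : ℕ → ℝ, (∀ n, c n ∈ strip a b ∧ w < c n) ∧
      (∀ x : ℝ, (x : EReal) < b → ∃ n, x < c n) ∧ (∀ m n, m ≤ n → c m ≤ c n) := by
  have hw' : -w ∈ strip (-b) (-a) := by
    constructor
    · rw [EReal.coe_neg]; exact EReal.neg_lt_neg_iff.2 hw.2
    · rw [EReal.coe_neg]; exact EReal.neg_lt_neg_iff.2 hw.1
  obtain ⟨c, h1, h2, h3⟩ := exists_seq_lower hw'
  refine ⟨fun n => -(c n), fun n => ⟨⟨?_, ?_⟩, ?_⟩, ?_, ?_⟩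
  · have := (h1 n).1.2
    rw [EReal.coe_neg]
    exact EReal.lt_neg_of_lt_neg this
  · have := (h1 n).1.1
    rw [EReal.coe_neg]
    exact EReal.neg_lt_of_neg_lt this
  · have := (h1 n).2
    show w < -(c n); linarith
  · intro x hx
    obtain ⟨n, hn⟩ := h2 (-x) (by rw [EReal.coe_neg]; exact EReal.neg_lt_neg_iff.2 hx)
    exact ⟨n, show x < -(c n) by linarith⟩
  · intro m n hmn
    have := h3 m n hmn
    show -(c m) ≤ -(c n); linarith
lemma g_nonpos (hg_sign : ∀ w ∈ strip a b, 0 ≤ (w - w₀) * g w)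
    {y : ℝ} (hy : y ∈ strip a b) (h : y < w₀) : g y ≤ 0 := by
  have := hg_sign y hy; nlinarith

lemma g_nonneg (hg_sign : ∀ w ∈ strip a b, 0 ≤ (w - w₀) * g w)
    {y : ℝ} (hy : y ∈ strip a b) (h : w₀ < y) : 0 ≤ g y := by
  have := hg_sign y hy; nlinarith

lemma q_contOn (hg_cont : ContinuousOn g (strip a b)) (hw₀ : w₀ ∈ strip a b) :
    ContinuousOn (fun y => g y * steinPdf g w₀ c₁ y) (strip a b) :=
  hg_cont.mul (pdf_contOn hg_cont hw₀)

lemma q_intOn_Ioc (hg_cont : ContinuousOn g (strip a b)) (hw₀ : w₀ ∈ strip a b)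
    {u v : ℝ} (hu : u ∈ strip a b) (hv : v ∈ strip a b) (huv : u ≤ v) :
    IntegrableOn (fun y => g y * steinPdf g w₀ c₁ y) (Set.Ioc u v) := by
  have h1 : Set.Icc u v ⊆ strip a b := fun x hx => mem_strip_of_le hu hv hx.1 hx.2
  exact (((q_contOn hg_cont hw₀).mono h1).integrableOn_Icc).mono_set Set.Ioc_subset_Icc_self

/-- Key left-tail bound. -/
lemma tail_left (hc₁ : 0 < c₁) (hg_cont : ContinuousOn g (strip a b)) (hw₀ : w₀ ∈ strip a b)
    (hg_sign : ∀ w ∈ strip a b, 0 ≤ (w - w₀) * g w) {w : ℝ} (hw : w ∈ strip a b) :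
    IntegrableOn (fun y => g y * steinPdf g w₀ c₁ y) (strip a b ∩ Set.Iic w) ∧
      -(steinPdf g w₀ c₁ w) ≤ ∫ y in strip a b ∩ Set.Iic w, g y * steinPdf g w₀ c₁ y := by
  -- first the case w ≤ w₀
  have base : ∀ w : ℝ, w ∈ strip a b → w ≤ w₀ →
      IntegrableOn (fun y => g y * steinPdf g w₀ c₁ y) (strip a b ∩ Set.Iic w) ∧
      -(steinPdf g w₀ c₁ w) ≤ ∫ y in strip a b ∩ Set.Iic w, g y * steinPdf g w₀ c₁ y := by
    intro w hw hww₀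
    set p := steinPdf g w₀ c₁ with hp
    set s : Set ℝ := strip a b ∩ Set.Iic w with hsdef
    have hsub : s ⊆ strip a b := Set.inter_subset_left
    have hs : MeasurableSet s := (isOpen_strip).measurableSet.inter measurableSet_Iic
    set h : ℝ → ℝ := fun y => -(g y * p y) with hh
    have hcont : ContinuousOn h (strip a b) := (q_contOn hg_cont hw₀).neg
    have hmeas : AEMeasurable h (MeasureTheory.volume.restrict s) :=
      (hcont.mono hsub).aemeasurable hs
    have hpos : ∀ᵐ y ∂(MeasureTheory.volume.restrict s), 0 ≤ h y := by
      have h0 : ∀ᵐ y : ℝ, y ≠ w₀ := by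
        rw [MeasureTheory.ae_iff]
        have : {y : ℝ | ¬ y ≠ w₀} = {w₀} := by ext y; simp
        rw [this]; exact Real.volume_singleton
      filter_upwards [MeasureTheory.ae_restrict_mem hs, MeasureTheory.ae_restrict_of_ae h0]
        with y hys hyne
      have hlt : y < w₀ := lt_of_le_of_ne (le_trans hys.2 hww₀) hyne
      have := g_nonpos hg_sign (hsub hys) hlt
      have hppos := (pdf_pos hc₁ y : 0 < p y)
      show (0:ℝ) ≤ -(g y * p y)
      have := mul_nonpos_of_nonpos_of_nonneg this hppos.le
      linarith
    obtain ⟨c, hc1, hc2, hc3⟩ := exists_seq_lower hw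
    have key := exhaust_bound hs hmeas hpos (t := fun n => Set.Ioi (c n))
      (fun n => measurableSet_Ioi)
      (fun m n hmn => Set.Ioi_subset_Ioi (hc3 m n hmn))
      (fun x hx => by
        obtain ⟨n, hn⟩ := hc2 x hx.1.1
        exact ⟨n, hn⟩)
      (M := steinPdf g w₀ c₁ w) (pdf_pos hc₁ w).le
      (fun n => by
        have hseq : s ∩ Set.Ioi (c n) = Set.Ioc (c n) w := by
          ext x
          constructor
          · rintro ⟨⟨_, hxw⟩, hxc⟩
            exact ⟨hxc, hxw⟩
          · rintro ⟨hxc, hxw⟩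
            exact ⟨⟨⟨lt_trans (hc1 n).1.1 (EReal.coe_lt_coe_iff.2 hxc),
              lt_of_le_of_lt (EReal.coe_le_coe_iff.2 hxw) hw.2⟩, hxw⟩, hxc⟩
        have hcw : c n ≤ w := (hc1 n).2.le
        have hint : IntegrableOn h (Set.Ioc (c n) w) :=
          (q_intOn_Ioc hg_cont hw₀ (hc1 n).1 hw hcw).neg
        have hval : ∫ y in Set.Ioc (c n) w, h y = p w - p (c n) := by
          have := intervalIntegral.integral_of_le (f := h) (μ := MeasureTheory.volume) hcw
          rw [← this]
          have : ∫ y in (c n)..w, h y = -∫ y in (c n)..w, g y * p y := by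
            rw [hh]; exact intervalIntegral.integral_neg
          rw [this, integral_q hg_cont hw₀ (hc1 n).1 hw]; ring
        rw [hseq]
        refine ⟨hint, ?_⟩
        rw [hval]
        have hpn : (0:ℝ) ≤ steinPdf g w₀ c₁ (c n) := (pdf_pos hc₁ (c n)).le
        show p w - p (c n) ≤ p w
        linarith)
    have hq : IntegrableOn (fun y => g y * p y) s := by
      refine key.1.neg.congr (Filter.Eventually.of_forall fun y => ?_)
      show -h y = g y * p y
      rw [hh]; ring
    refine ⟨hq, ?_⟩
    have : ∫ y in s, g y * p y = -∫ y in s, h y := by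
      rw [hh]; rw [MeasureTheory.integral_neg]; ring
    rw [this]
    linarith [key.2]
  rcases le_or_gt w w₀ with hle | hlt
  · exact base w hw hle
  · set p := steinPdf g w₀ c₁ with hp
    have hsplit : strip a b ∩ Set.Iic w =
        (strip a b ∩ Set.Iic w₀) ∪ Set.Ioc w₀ w := by
      ext x
      constructor
      · rintro ⟨hxs, hxw⟩
        rcases le_or_gt x w₀ with h | h
        · exact Or.inl ⟨hxs, h⟩
        · exact Or.inr ⟨h, hxw⟩
      · rintro (⟨hxs, hxw⟩ | ⟨hx1, hx2⟩)
        · exact ⟨hxs, le_trans hxw hlt.le⟩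
        · refine ⟨⟨lt_trans hw₀.1 (EReal.coe_lt_coe_iff.2 hx1), ?_⟩, hx2⟩
          exact lt_of_le_of_lt (EReal.coe_le_coe_iff.2 hx2) hw.2
    have hdisj : Disjoint (strip a b ∩ Set.Iic w₀) (Set.Ioc w₀ w) := by
      rw [Set.disjoint_left]
      rintro x ⟨_, hx1⟩ ⟨hx2, _⟩
      exact absurd (Set.mem_Iic.1 hx1) (not_le.2 hx2)
    have h1 := base w₀ hw₀ le_rfl
    have h2 : IntegrableOn (fun y => g y * p y) (Set.Ioc w₀ w) :=
      q_intOn_Ioc hg_cont hw₀ hw₀ hw hlt.le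
    have hval2 : ∫ y in Set.Ioc w₀ w, g y * p y = p w₀ - p w := by
      rw [← intervalIntegral.integral_of_le (μ := MeasureTheory.volume) hlt.le]
      exact integral_q hg_cont hw₀ hw₀ hw
    constructor
    · rw [hsplit]; exact h1.1.union h2
    · rw [hsplit, MeasureTheory.setIntegral_union hdisj measurableSet_Ioc h1.1 h2, hval2]
      linarith [h1.2]

/-- Key right-tail bound. -/
lemma tail_right (hc₁ : 0 < c₁) (hg_cont : ContinuousOn g (strip a b)) (hw₀ : w₀ ∈ strip a b)
    (hg_sign : ∀ w ∈ strip a b, 0 ≤ (w - w₀) * g w) {w : ℝ} (hw : w ∈ strip a b) :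
    IntegrableOn (fun y => g y * steinPdf g w₀ c₁ y) (strip a b ∩ Set.Ioi w) ∧
      ∫ y in strip a b ∩ Set.Ioi w, g y * steinPdf g w₀ c₁ y ≤ steinPdf g w₀ c₁ w := by
  have base : ∀ w : ℝ, w ∈ strip a b → w₀ ≤ w →
      IntegrableOn (fun y => g y * steinPdf g w₀ c₁ y) (strip a b ∩ Set.Ioi w) ∧
      ∫ y in strip a b ∩ Set.Ioi w, g y * steinPdf g w₀ c₁ y ≤ steinPdf g w₀ c₁ w := by
    intro w hw hww₀
    set p := steinPdf g w₀ c₁ with hp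
    set s : Set ℝ := strip a b ∩ Set.Ioi w with hsdef
    have hsub : s ⊆ strip a b := Set.inter_subset_left
    have hs : MeasurableSet s := (isOpen_strip).measurableSet.inter measurableSet_Ioi
    set h : ℝ → ℝ := fun y => g y * p y with hh
    have hmeas : AEMeasurable h (MeasureTheory.volume.restrict s) :=
      ((q_contOn hg_cont hw₀).mono hsub).aemeasurable hs
    have hpos : ∀ᵐ y ∂(MeasureTheory.volume.restrict s), 0 ≤ h y := by
      filter_upwards [MeasureTheory.ae_restrict_mem hs] with y hys
      have hlt : w₀ < y := lt_of_le_of_lt hww₀ hys.2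
      have := g_nonneg hg_sign (hsub hys) hlt
      exact mul_nonneg this (pdf_pos hc₁ y).le
    obtain ⟨c, hc1, hc2, hc3⟩ := exists_seq_upper hw
    have key := exhaust_bound hs hmeas hpos (t := fun n => Set.Iio (c n))
      (fun n => measurableSet_Iio)
      (fun m n hmn => Set.Iio_subset_Iio (hc3 m n hmn))
      (fun x hx => by
        obtain ⟨n, hn⟩ := hc2 x hx.1.2
        exact ⟨n, hn⟩)
      (M := steinPdf g w₀ c₁ w) (pdf_pos hc₁ w).le
      (fun n => by
        have hseq : s ∩ Set.Iio (c n) = Set.Ioo w (c n) := by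
          ext x
          constructor
          · rintro ⟨⟨_, hxw⟩, hxc⟩
            exact ⟨hxw, hxc⟩
          · rintro ⟨hxw, hxc⟩
            exact ⟨⟨⟨lt_trans hw.1 (EReal.coe_lt_coe_iff.2 hxw),
              lt_trans (EReal.coe_lt_coe_iff.2 hxc) (hc1 n).1.2⟩, hxw⟩, hxc⟩
        have hcw : w ≤ c n := (hc1 n).2.le
        have hint : IntegrableOn h (Set.Ioo w (c n)) :=
          (q_intOn_Ioc hg_cont hw₀ hw (hc1 n).1 hcw).mono_set Set.Ioo_subset_Ioc_self
        have hval : ∫ y in Set.Ioo w (c n), h y = p w - p (c n) := by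
          rw [← MeasureTheory.integral_Ioc_eq_integral_Ioo,
            ← intervalIntegral.integral_of_le (μ := MeasureTheory.volume) hcw]
          exact integral_q hg_cont hw₀ hw (hc1 n).1
        rw [hseq]
        refine ⟨hint, ?_⟩
        rw [hval]
        have hpn : (0:ℝ) ≤ steinPdf g w₀ c₁ (c n) := (pdf_pos hc₁ (c n)).le
        show p w - p (c n) ≤ p w
        linarith)
    exact key
  rcases le_or_gt w₀ w with hle | hlt
  · exact base w hw hle
  · set p := steinPdf g w₀ c₁ with hp
    have hsplit : strip a b ∩ Set.Ioi w =
        Set.Ioc w w₀ ∪ (strip a b ∩ Set.Ioi w₀) := by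
      ext x
      constructor
      · rintro ⟨hxs, hxw⟩
        rcases le_or_gt x w₀ with h | h
        · exact Or.inl ⟨hxw, h⟩
        · exact Or.inr ⟨hxs, h⟩
      · rintro (⟨hx1, hx2⟩ | ⟨hxs, hxw⟩)
        · refine ⟨⟨lt_trans hw.1 (EReal.coe_lt_coe_iff.2 hx1), ?_⟩, hx1⟩
          exact lt_of_le_of_lt (EReal.coe_le_coe_iff.2 hx2) hw₀.2
        · exact ⟨hxs, lt_trans hlt hxw⟩
    have hdisj : Disjoint (Set.Ioc w w₀) (strip a b ∩ Set.Ioi w₀) := by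
      rw [Set.disjoint_left]
      rintro x ⟨_, hx1⟩ ⟨_, hx2⟩
      exact absurd hx1 (not_le.2 hx2)
    have h1 := base w₀ hw₀ le_rfl
    have h2 : IntegrableOn (fun y => g y * p y) (Set.Ioc w w₀) :=
      q_intOn_Ioc hg_cont hw₀ hw hw₀ hlt.le
    have hval2 : ∫ y in Set.Ioc w w₀, g y * p y = p w - p w₀ := by
      rw [← intervalIntegral.integral_of_le (μ := MeasureTheory.volume) hlt.le]
      exact integral_q hg_cont hw₀ hw hw₀
    constructor
    · rw [hsplit]; exact h2.union h1.1
    · rw [hsplit, MeasureTheory.setIntegral_union hdisj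
        ((isOpen_strip).measurableSet.inter measurableSet_Ioi) h2 h1.1, hval2]
      linarith [h1.2]


end SteinAux

/-- Lemma 4.1, (4.5): `F(z) - 1 ≤ g(w) f_z(w) ≤ F(z)`, hence `|g f_z| ≤ 1`. -/
theorem steinSol_gMul_bounds
    (a b : EReal) (hab : a < b) (g : ℝ → ℝ) (w₀ c₁ : ℝ)
    (hw₀ : w₀ ∈ strip a b) (hc₁ : 0 < c₁)
    (hnorm : ∫ y in strip a b, steinPdf g w₀ c₁ y = 1)
    -- condition (A1)
    (hg_mono : MonotoneOn g (strip a b))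
    (hg_sign : ∀ w ∈ strip a b, 0 ≤ (w - w₀) * g w)
    -- condition (A2)
    (hg_diff : ∀ w ∈ strip a b, DifferentiableAt ℝ g w)
    (hg'_diff : ∀ w ∈ strip a b, DifferentiableAt ℝ (deriv g) w)
    (hg'_cont : ContinuousOn (deriv g) (strip a b))
    (hg_ineq : ∀ w ∈ strip a b, 0 ≤ 2 * (deriv g w) ^ 2 - g w * deriv (deriv g) w)
    -- condition (A3)
    (hlim_a : Tendsto (fun y => g y * steinPdf g w₀ c₁ y)
      (Filter.comap (fun x : ℝ => (x : EReal)) (nhdsWithin a (Set.Ioi a))) (nhds 0))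
    (hlim_b : Tendsto (fun y => g y * steinPdf g w₀ c₁ y)
      (Filter.comap (fun x : ℝ => (x : EReal)) (nhdsWithin b (Set.Iio b))) (nhds 0))
    (z : ℝ) (hz : z ∈ strip a b) :
    ∀ w ∈ strip a b, (steinCDF g a b w₀ c₁ z - 1 ≤ g w * steinSol g a b w₀ c₁ z w ∧ g w * steinSol g a b w₀ c₁ z w ≤ steinCDF g a b w₀ c₁ z) ∧ |g w * steinSol g a b w₀ c₁ z w| ≤ 1 := by
  intro w hw
  have hg_cont : ContinuousOn g (strip a b) := fun y hy =>
    ((hg_diff y hy).continuousAt).continuousWithinAt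
  set p := steinPdf g w₀ c₁ with hpdef
  set F := steinCDF g a b w₀ c₁ with hFdef
  have hPw : 0 < p w := SteinAux.pdf_pos hc₁ w
  have hmS : MeasurableSet (strip a b) := SteinAux.isOpen_strip.measurableSet
  have hpInt : MeasureTheory.IntegrableOn p (strip a b) := by
    by_contra hcon
    rw [MeasureTheory.integral_undef hcon] at hnorm
    norm_num at hnorm
  have hpae : ∀ s : Set ℝ, 0 ≤ᵐ[MeasureTheory.volume.restrict s] p :=
    fun s => Filter.Eventually.of_forall fun y => (SteinAux.pdf_pos hc₁ y).le
  have hFnonneg : ∀ u : ℝ, 0 ≤ F u := fun u =>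
    MeasureTheory.setIntegral_nonneg (hmS.inter measurableSet_Iic)
      (fun y _ => (SteinAux.pdf_pos hc₁ y).le)
  have hFmono : ∀ u v : ℝ, u ≤ v → F u ≤ F v := by
    intro u v huv
    refine MeasureTheory.setIntegral_mono_set
      (hpInt.mono_set Set.inter_subset_left) (hpae _) ?_
    exact HasSubset.Subset.eventuallyLE
      (Set.inter_subset_inter_right _ (Set.Iic_subset_Iic.2 huv))
  have hFle1 : ∀ u : ℝ, F u ≤ 1 := by
    intro u
    rw [← hnorm]
    exact MeasureTheory.setIntegral_mono_set hpInt (hpae _)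
      (HasSubset.Subset.eventuallyLE Set.inter_subset_left)
  -- split of the total mass
  have hIoi : ∀ u : ℝ, (∫ y in strip a b ∩ Set.Ioi u, p y) = 1 - F u := by
    intro u
    have hU : strip a b = (strip a b ∩ Set.Iic u) ∪ (strip a b ∩ Set.Ioi u) := by
      rw [← Set.inter_union_distrib_left, Set.Iic_union_Ioi, Set.inter_univ]
    have hdisj : Disjoint (strip a b ∩ Set.Iic u) (strip a b ∩ Set.Ioi u) := by
      rw [Set.disjoint_left]
      rintro x ⟨_, hx1⟩ ⟨_, hx2⟩
      exact absurd (Set.mem_Iic.1 hx1) (not_le.2 hx2)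
    have hcalc : (∫ y in strip a b, p y) = F u + ∫ y in strip a b ∩ Set.Ioi u, p y := by
      calc (∫ y in strip a b, p y)
          = ∫ y in (strip a b ∩ Set.Iic u) ∪ (strip a b ∩ Set.Ioi u), p y := by rw [← hU]
        _ = F u + ∫ y in strip a b ∩ Set.Ioi u, p y :=
            MeasureTheory.setIntegral_union hdisj (hmS.inter measurableSet_Ioi)
              (hpInt.mono_set Set.inter_subset_left) (hpInt.mono_set Set.inter_subset_left)
    rw [hnorm] at hcalc
    linarith
  -- key inequality 1 : -(p w) ≤ g w * F w
  have hTL := SteinAux.tail_left hc₁ hg_cont hw₀ hg_sign hw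
  have hA : -(p w) ≤ g w * F w := by
    have hmon : ∫ y in strip a b ∩ Set.Iic w, g y * p y
        ≤ ∫ y in strip a b ∩ Set.Iic w, g w * p y := by
      refine MeasureTheory.setIntegral_mono_on hTL.1
        ((hpInt.mono_set Set.inter_subset_left).const_mul (g w))
        (hmS.inter measurableSet_Iic) ?_
      intro y hy
      exact mul_le_mul_of_nonneg_right (hg_mono hy.1 hw hy.2) (SteinAux.pdf_pos hc₁ y).le
    have hconst : ∫ y in strip a b ∩ Set.Iic w, g w * p y = g w * F w := by
      rw [MeasureTheory.integral_const_mul]; rfl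
    linarith [hTL.2]
  -- key inequality 2 : g w * (1 - F w) ≤ p w
  have hTR := SteinAux.tail_right hc₁ hg_cont hw₀ hg_sign hw
  have hB : g w * (1 - F w) ≤ p w := by
    have hmon : ∫ y in strip a b ∩ Set.Ioi w, g w * p y
        ≤ ∫ y in strip a b ∩ Set.Ioi w, g y * p y := by
      refine MeasureTheory.setIntegral_mono_on
        ((hpInt.mono_set Set.inter_subset_left).const_mul (g w)) hTR.1
        (hmS.inter measurableSet_Ioi) ?_
      intro y hy
      exact mul_le_mul_of_nonneg_right (hg_mono hw hy.1 (le_of_lt hy.2))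
        (SteinAux.pdf_pos hc₁ y).le
    have hconst : ∫ y in strip a b ∩ Set.Ioi w, g w * p y = g w * (1 - F w) := by
      rw [MeasureTheory.integral_const_mul, hIoi w]
    linarith [hTR.2]
  have h0z : 0 ≤ F z := hFnonneg z
  have h1z : F z ≤ 1 := hFle1 z
  have h0w : 0 ≤ F w := hFnonneg w
  have h1w : F w ≤ 1 := hFle1 w
  have hmain : F z - 1 ≤ g w * steinSol g a b w₀ c₁ z w ∧
      g w * steinSol g a b w₀ c₁ z w ≤ F z := by
    rw [steinSol]
    by_cases hwz : w ≤ z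
    · rw [if_pos hwz]
      have hFwz : F w ≤ F z := hFmono w z hwz
      constructor
      · rw [← mul_div_assoc, le_div_iff₀ hPw]
        nlinarith [mul_le_mul_of_nonneg_right hA (by linarith : (0:ℝ) ≤ 1 - F z)]
      · rw [← mul_div_assoc, div_le_iff₀ hPw]
        rcases le_or_gt (g w) 0 with hgw | hgw
        · nlinarith [mul_nonneg h0w (by linarith : (0:ℝ) ≤ 1 - F z),
            mul_nonneg h0z hPw.le,
            mul_nonpos_of_nonpos_of_nonneg hgw
              (mul_nonneg h0w (by linarith : (0:ℝ) ≤ 1 - F z))]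
        · nlinarith [mul_nonneg hgw.le (by linarith : (0:ℝ) ≤ F z - F w),
            mul_le_mul_of_nonneg_right hB h0z]
    · rw [if_neg hwz]
      push_neg at hwz
      have hFzw : F z ≤ F w := hFmono z w hwz.le
      constructor
      · rw [← mul_div_assoc, le_div_iff₀ hPw]
        rcases le_or_gt 0 (g w) with hgw | hgw
        · nlinarith [mul_nonneg hgw (mul_nonneg h0z (by linarith : (0:ℝ) ≤ 1 - F w)),
            mul_nonneg (by linarith : (0:ℝ) ≤ 1 - F z) hPw.le]
        · nlinarith [mul_le_mul_of_nonneg_right hA (by linarith : (0:ℝ) ≤ 1 - F z),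
            mul_nonneg (neg_nonneg.2 hgw.le) (by linarith : (0:ℝ) ≤ F w - F z)]
      · rw [← mul_div_assoc, div_le_iff₀ hPw]
        rcases le_or_gt (g w) 0 with hgw | hgw
        · nlinarith [mul_nonpos_of_nonpos_of_nonneg hgw
            (mul_nonneg h0z (by linarith : (0:ℝ) ≤ 1 - F w)),
            mul_nonneg h0z hPw.le]
        · nlinarith [mul_le_mul_of_nonneg_right hB h0z]
  refine ⟨hmain, abs_le.2 ⟨?_, ?_⟩⟩
  · linarith [hmain.1]
  · linarith [hmain.2]
end

section
/- Assume g satisfies conditions (A1)–(A3) on (a,b), let F be the distribution function with density p(y) = c₁ e^{−G(y)} on (a,b), and for z ∈ (a,b) let f_z be the Stein solution defined by f_z(w) = F(w)(1 − F(z))/p(w) for w ≤ z and f_z(w) = F(z)(1 − F(w))/p(w) for w > z. Then |f_z'(w)| ≤ 1 for all w ∈ (a,b) at which f_z is differentiable (i.e. all w ≠ z). -/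
open MeasureTheory Filter Set

open Topology

lemma strip_isOpen (a b : EReal) : IsOpen (strip a b) := by
  have : strip a b = (fun x : ℝ => (x : EReal)) ⁻¹' (Set.Ioo a b) := rfl
  rw [this]
  exact (isOpen_Ioo).preimage continuous_coe_real_ereal


lemma strip_ordConnected (a b : EReal) : Set.OrdConnected (strip a b) :=
  ⟨fun x hx y hy t ht => ⟨lt_of_lt_of_le hx.1 (EReal.coe_le_coe_iff.2 ht.1),
    lt_of_le_of_lt (EReal.coe_le_coe_iff.2 ht.2) hy.2⟩⟩


lemma steinPdf_pos {g : ℝ → ℝ} {w₀ c₁ : ℝ} (hc₁ : 0 < c₁) (y : ℝ) :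
    0 < steinPdf g w₀ c₁ y := mul_pos hc₁ (Real.exp_pos _)


lemma steinPdf_hasDerivAt {a b : EReal} {g : ℝ → ℝ} {w₀ c₁ : ℝ}
    (hw₀ : w₀ ∈ strip a b) (hg_cont : ContinuousOn g (strip a b))
    {w : ℝ} (hw : w ∈ strip a b) :
    HasDerivAt (steinPdf g w₀ c₁) (-(g w) * steinPdf g w₀ c₁ w) w := by
  have hG : HasDerivAt (fun y => ∫ t in w₀..y, g t) (g w) w := by
    apply intervalIntegral.integral_hasDerivAt_right
    · exact (hg_cont.mono ((strip_ordConnected a b).uIcc_subset hw₀ hw)).intervalIntegrable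
    · exact hg_cont.stronglyMeasurableAtFilter (strip_isOpen a b) w hw
    · exact hg_cont.continuousAt ((strip_isOpen a b).mem_nhds hw)
  have : HasDerivAt (fun y => c₁ * Real.exp (-(∫ t in w₀..y, g t)))
      (c₁ * (Real.exp (-(∫ t in w₀..w, g t)) * -(g w))) w :=
    (((hG.neg).exp)).const_mul c₁
  convert this using 1
  rfl
  change -(g w) * (c₁ * Real.exp (-(∫ t in w₀..w, g t))) = _; ring


lemma steinPdf_contOn {a b : EReal} {g : ℝ → ℝ} {w₀ c₁ : ℝ}
    (hw₀ : w₀ ∈ strip a b) (hg_cont : ContinuousOn g (strip a b)) :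
    ContinuousOn (steinPdf g w₀ c₁) (strip a b) := fun w hw =>
  ((steinPdf_hasDerivAt hw₀ hg_cont hw).continuousAt).continuousWithinAt


lemma integrableOn_steinPdf {a b : EReal} {g : ℝ → ℝ} {w₀ c₁ : ℝ}
    (hnorm : ∫ y in strip a b, steinPdf g w₀ c₁ y = 1) :
    IntegrableOn (steinPdf g w₀ c₁) (strip a b) := by
  by_contra h
  rw [MeasureTheory.integral_undef h] at hnorm
  norm_num at hnorm


lemma steinCDF_sub {a b : EReal} {g : ℝ → ℝ} {w₀ c₁ : ℝ}
    (hnorm : ∫ y in strip a b, steinPdf g w₀ c₁ y = 1)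
    {y w : ℝ} (hy : y ∈ strip a b) (hw : w ∈ strip a b) (hyw : y ≤ w) :
    steinCDF g a b w₀ c₁ w = steinCDF g a b w₀ c₁ y + ∫ t in y..w, steinPdf g w₀ c₁ t := by
  have hioc : Set.Ioc y w ⊆ strip a b :=
    fun t ht => (strip_ordConnected a b).out hy hw ⟨le_of_lt ht.1, ht.2⟩
  have hset : strip a b ∩ Set.Iic w = (strip a b ∩ Set.Iic y) ∪ Set.Ioc y w := by
    ext t
    constructor
    · rintro ⟨htS, htw⟩
      rcases le_or_gt t y with h | h
      · exact Or.inl ⟨htS, h⟩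
      · exact Or.inr ⟨h, htw⟩
    · rintro (⟨htS, hty⟩ | ht)
      · exact ⟨htS, le_trans hty hyw⟩
      · exact ⟨hioc ht, ht.2⟩
  have hdisj : Disjoint (strip a b ∩ Set.Iic y) (Set.Ioc y w) :=
    (Set.Iic_disjoint_Ioi le_rfl).mono Set.inter_subset_right Set.Ioc_subset_Ioi_self
  have hint := integrableOn_steinPdf hnorm
  rw [steinCDF, hset, MeasureTheory.setIntegral_union hdisj measurableSet_Ioc
      (hint.mono_set (Set.inter_subset_left)) (hint.mono_set hioc),
    intervalIntegral.integral_of_le hyw]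
  rfl


lemma steinCDF_nonneg {a b : EReal} {g : ℝ → ℝ} {w₀ c₁ : ℝ} (hc₁ : 0 < c₁) (w : ℝ) :
    0 ≤ steinCDF g a b w₀ c₁ w :=
  MeasureTheory.setIntegral_nonneg ((strip_isOpen a b).measurableSet.inter measurableSet_Iic)
    (fun y _ => (steinPdf_pos hc₁ y).le)


lemma steinCDF_mono {a b : EReal} {g : ℝ → ℝ} {w₀ c₁ : ℝ} (hc₁ : 0 < c₁)
    (hnorm : ∫ y in strip a b, steinPdf g w₀ c₁ y = 1)
    {y w : ℝ} (hyw : y ≤ w) : steinCDF g a b w₀ c₁ y ≤ steinCDF g a b w₀ c₁ w := by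
  apply MeasureTheory.setIntegral_mono_set
    ((integrableOn_steinPdf hnorm).mono_set Set.inter_subset_left)
    (Filter.Eventually.of_forall fun t => (steinPdf_pos hc₁ t).le)
  exact (Set.inter_subset_inter_right _ (Set.Iic_subset_Iic.2 hyw)).eventuallyLE


lemma steinCDF_le_one {a b : EReal} {g : ℝ → ℝ} {w₀ c₁ : ℝ} (hc₁ : 0 < c₁)
    (hnorm : ∫ y in strip a b, steinPdf g w₀ c₁ y = 1)
    (w : ℝ) : steinCDF g a b w₀ c₁ w ≤ 1 := by
  rw [← hnorm]
  apply MeasureTheory.setIntegral_mono_set (integrableOn_steinPdf hnorm)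
    (Filter.Eventually.of_forall fun t => (steinPdf_pos hc₁ t).le)
  exact (Set.inter_subset_left).eventuallyLE


lemma steinCDF_hasDerivAt {a b : EReal} {g : ℝ → ℝ} {w₀ c₁ : ℝ}
    (hw₀ : w₀ ∈ strip a b) (hg_cont : ContinuousOn g (strip a b))
    (hnorm : ∫ y in strip a b, steinPdf g w₀ c₁ y = 1)
    {w : ℝ} (hw : w ∈ strip a b) :
    HasDerivAt (steinCDF g a b w₀ c₁) (steinPdf g w₀ c₁ w) w := by
  have hpc := steinPdf_contOn hw₀ hg_cont (c₁ := c₁)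
  have key : ∀ u ∈ strip a b,
      steinCDF g a b w₀ c₁ u = steinCDF g a b w₀ c₁ w₀ + ∫ t in w₀..u, steinPdf g w₀ c₁ t := by
    intro u hu
    rcases le_or_gt w₀ u with h | h
    · exact steinCDF_sub hnorm hw₀ hu h
    · have := steinCDF_sub hnorm hu hw₀ h.le
      rw [intervalIntegral.integral_symm]
      linarith
  have hd : HasDerivAt (fun u => steinCDF g a b w₀ c₁ w₀ + ∫ t in w₀..u, steinPdf g w₀ c₁ t)
      (steinPdf g w₀ c₁ w) w := by
    apply HasDerivAt.const_add
    apply intervalIntegral.integral_hasDerivAt_right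
    · exact (hpc.mono ((strip_ordConnected a b).uIcc_subset hw₀ hw)).intervalIntegrable
    · exact hpc.stronglyMeasurableAtFilter (strip_isOpen a b) w hw
    · exact hpc.continuousAt ((strip_isOpen a b).mem_nhds hw)
  apply hd.congr_of_eventuallyEq
  filter_upwards [(strip_isOpen a b).mem_nhds hw] with u hu using key u hu


lemma exists_cdf_small {a b : EReal} {g : ℝ → ℝ} {w₀ c₁ : ℝ} (hc₁ : 0 < c₁)
    (hnorm : ∫ y in strip a b, steinPdf g w₀ c₁ y = 1)
    {w : ℝ} (hw : w ∈ strip a b) {ε : ℝ} (hε : 0 < ε) :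
    ∃ y ∈ strip a b, y ≤ w ∧ steinCDF g a b w₀ c₁ y ≤ ε := by
  classical
  have ha_ne_top : a ≠ ⊤ := (hw.1.trans_le le_top).ne
  set u : ℕ → ℝ := fun n => if a = ⊥ then -(n : ℝ) else a.toReal + 1 / (n + 1) with hu_def
  have hau : ∀ n, a < (u n : EReal) := by
    intro n
    by_cases hbot : a = ⊥
    · simp only [hu_def, hbot, if_true]
      exact EReal.bot_lt_coe _
    · have : a = ((a.toReal : ℝ) : EReal) := (EReal.coe_toReal ha_ne_top hbot).symm
      rw [this, hu_def]
      simp only [hbot, if_false]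
      exact_mod_cast lt_add_of_pos_right a.toReal (by positivity : (0:ℝ) < 1 / ((n : ℝ) + 1))
  have hu_anti : Antitone u := by
    intro m n hmn
    by_cases hbot : a = ⊥
    · simp only [hu_def, hbot, if_true]
      exact neg_le_neg (by exact_mod_cast hmn)
    · simp only [hu_def, hbot, if_false]
      have : (1 : ℝ) / (n + 1) ≤ 1 / (m + 1) := by
        apply one_div_le_one_div_of_le (by positivity)
        exact_mod_cast add_le_add_left (by exact_mod_cast hmn) 1
      linarith
  have heve : ∀ x : ℝ, a < (x : EReal) → ∀ᶠ n in atTop, u n < x := by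
    intro x hx
    by_cases hbot : a = ⊥
    · filter_upwards [tendsto_natCast_atTop_atTop.eventually_ge_atTop (1 - x)] with n hn
      simp only [hu_def, hbot, if_true]; linarith
    · have hax : a.toReal < x := by
        have : a = ((a.toReal : ℝ) : EReal) := (EReal.coe_toReal ha_ne_top hbot).symm
        rw [this] at hx
        exact_mod_cast hx
      have h0 : Tendsto (fun n : ℕ => 1 / ((n : ℝ) + 1)) atTop (𝓝 0) :=
        tendsto_one_div_add_atTop_nhds_zero_nat
      filter_upwards [h0.eventually (eventually_lt_nhds (by linarith : (0:ℝ) < x - a.toReal))]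
        with n hn
      simp only [hu_def, hbot, if_false]; linarith
  set s : ℕ → Set ℝ := fun n => strip a b ∩ Set.Ioi (u n) with hs_def
  have hsm : ∀ n, MeasurableSet (s n) :=
    fun n => (strip_isOpen a b).measurableSet.inter measurableSet_Ioi
  have hsmono : Monotone s := fun m n hmn =>
    Set.inter_subset_inter_right _ (Set.Ioi_subset_Ioi (hu_anti hmn))
  have hsU : (⋃ n, s n) = strip a b := by
    apply Set.Subset.antisymm (Set.iUnion_subset fun n => Set.inter_subset_left)
    intro x hx
    obtain ⟨n, hn⟩ := (heve x hx.1).exists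
    exact Set.mem_iUnion.2 ⟨n, hx, hn⟩
  have hint := integrableOn_steinPdf hnorm
  have htend : Tendsto (fun n => ∫ t in s n, steinPdf g w₀ c₁ t) atTop (𝓝 1) := by
    have := tendsto_setIntegral_of_monotone hsm hsmono (by rw [hsU]; exact hint)
    rwa [hsU, hnorm] at this
  have hdecomp : ∀ n, steinCDF g a b w₀ c₁ (u n) = 1 - ∫ t in s n, steinPdf g w₀ c₁ t := by
    intro n
    have hset : strip a b = (strip a b ∩ Set.Iic (u n)) ∪ s n := by
      ext t
      constructor
      · intro ht
        rcases le_or_gt t (u n) with h | h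
        · exact Or.inl ⟨ht, h⟩
        · exact Or.inr ⟨ht, h⟩
      · rintro (⟨ht, _⟩ | ⟨ht, _⟩) <;> exact ht
    have hdisj : Disjoint (strip a b ∩ Set.Iic (u n)) (s n) :=
      (Set.Iic_disjoint_Ioi le_rfl).mono Set.inter_subset_right Set.inter_subset_right
    have := MeasureTheory.setIntegral_union hdisj (hsm n)
      (hint.mono_set Set.inter_subset_left) (hint.mono_set Set.inter_subset_left)
    rw [← hset, hnorm] at this
    rw [steinCDF]
    linarith
  have hev2 : ∀ᶠ n in atTop, 1 - ε ≤ ∫ t in s n, steinPdf g w₀ c₁ t :=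
    htend.eventually (eventually_ge_nhds (by linarith : 1 - ε < 1))
  obtain ⟨n, hn1, hn2⟩ := (hev2.and (heve w hw.1)).exists
  refine ⟨u n, ⟨hau n, ?_⟩, hn2.le, ?_⟩
  · exact lt_of_le_of_lt (EReal.coe_le_coe_iff.2 hn2.le) hw.2
  · rw [hdecomp n]; linarith


lemma exists_cdf_big {a b : EReal} {g : ℝ → ℝ} {w₀ c₁ : ℝ} (hc₁ : 0 < c₁)
    (hnorm : ∫ y in strip a b, steinPdf g w₀ c₁ y = 1)
    {w : ℝ} (hw : w ∈ strip a b) {ε : ℝ} (hε : 0 < ε) :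
    ∃ y ∈ strip a b, w ≤ y ∧ 1 - ε ≤ steinCDF g a b w₀ c₁ y := by
  classical
  have hb_ne_bot : b ≠ ⊥ := (bot_le.trans_lt hw.2).ne'
  set v : ℕ → ℝ := fun n => if b = ⊤ then (n : ℝ) else b.toReal - 1 / (n + 1) with hv_def
  have hvb : ∀ n, (v n : EReal) < b := by
    intro n
    by_cases htop : b = ⊤
    · simp only [hv_def, htop, if_true]
      exact EReal.coe_lt_top _
    · have : b = ((b.toReal : ℝ) : EReal) := (EReal.coe_toReal htop hb_ne_bot).symm
      rw [this, hv_def]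
      simp only [htop, if_false]
      exact_mod_cast sub_lt_self b.toReal (by positivity : (0:ℝ) < 1 / ((n : ℝ) + 1))
  have hv_mono : Monotone v := by
    intro m n hmn
    by_cases htop : b = ⊤
    · simp only [hv_def, htop, if_true]
      exact_mod_cast hmn
    · simp only [hv_def, htop, if_false]
      have : (1 : ℝ) / (n + 1) ≤ 1 / (m + 1) := by
        apply one_div_le_one_div_of_le (by positivity)
        exact_mod_cast add_le_add_left (by exact_mod_cast hmn) 1
      linarith
  have heve : ∀ x : ℝ, (x : EReal) < b → ∀ᶠ n in atTop, x < v n := by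
    intro x hx
    by_cases htop : b = ⊤
    · filter_upwards [tendsto_natCast_atTop_atTop.eventually_ge_atTop (x + 1)] with n hn
      simp only [hv_def, htop, if_true]; linarith
    · have hbx : x < b.toReal := by
        have : b = ((b.toReal : ℝ) : EReal) := (EReal.coe_toReal htop hb_ne_bot).symm
        rw [this] at hx
        exact_mod_cast hx
      have h0 : Tendsto (fun n : ℕ => 1 / ((n : ℝ) + 1)) atTop (𝓝 0) :=
        tendsto_one_div_add_atTop_nhds_zero_nat
      filter_upwards [h0.eventually (eventually_lt_nhds (by linarith : (0:ℝ) < b.toReal - x))]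
        with n hn
      simp only [hv_def, htop, if_false]; linarith
  set s : ℕ → Set ℝ := fun n => strip a b ∩ Set.Iic (v n) with hs_def
  have hsm : ∀ n, MeasurableSet (s n) :=
    fun n => (strip_isOpen a b).measurableSet.inter measurableSet_Iic
  have hsmono : Monotone s := fun m n hmn =>
    Set.inter_subset_inter_right _ (Set.Iic_subset_Iic.2 (hv_mono hmn))
  have hsU : (⋃ n, s n) = strip a b := by
    apply Set.Subset.antisymm (Set.iUnion_subset fun n => Set.inter_subset_left)
    intro x hx
    obtain ⟨n, hn⟩ := (heve x hx.2).exists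
    exact Set.mem_iUnion.2 ⟨n, hx, hn.le⟩
  have hint := integrableOn_steinPdf hnorm
  have htend : Tendsto (fun n => steinCDF g a b w₀ c₁ (v n)) atTop (𝓝 1) := by
    have := tendsto_setIntegral_of_monotone hsm hsmono (by rw [hsU]; exact hint)
    rwa [hsU, hnorm] at this
  have hev2 : ∀ᶠ n in atTop, 1 - ε ≤ steinCDF g a b w₀ c₁ (v n) :=
    htend.eventually (eventually_ge_nhds (by linarith : 1 - ε < 1))
  obtain ⟨n, hn1, hn2⟩ := (hev2.and (heve w hw.2)).exists
  exact ⟨v n, ⟨lt_of_lt_of_le hw.1 (EReal.coe_le_coe_iff.2 hn2.le), hvb n⟩, hn2.le, hn1⟩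


lemma integral_g_mul_pdf {a b : EReal} {g : ℝ → ℝ} {w₀ c₁ : ℝ}
    (hw₀ : w₀ ∈ strip a b) (hg_cont : ContinuousOn g (strip a b))
    {y w : ℝ} (hy : y ∈ strip a b) (hw : w ∈ strip a b) :
    ∫ t in y..w, g t * steinPdf g w₀ c₁ t = steinPdf g w₀ c₁ y - steinPdf g w₀ c₁ w := by
  have hsub : Set.uIcc y w ⊆ strip a b := (strip_ordConnected a b).uIcc_subset hy hw
  have hpc := steinPdf_contOn hw₀ hg_cont (c₁ := c₁)
  have hcont : ContinuousOn (fun t => -(g t) * steinPdf g w₀ c₁ t) (Set.uIcc y w) :=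
    ((hg_cont.mono hsub).neg).mul (hpc.mono hsub)
  have := intervalIntegral.integral_eq_sub_of_hasDerivAt
    (f := steinPdf g w₀ c₁) (f' := fun t => -(g t) * steinPdf g w₀ c₁ t)
    (fun t ht => steinPdf_hasDerivAt hw₀ hg_cont (hsub ht)) hcont.intervalIntegrable
  have hneg : ∫ t in y..w, g t * steinPdf g w₀ c₁ t
      = -∫ t in y..w, -(g t) * steinPdf g w₀ c₁ t := by
    rw [← intervalIntegral.integral_neg]
    congr 1; funext t; ring
  rw [hneg, this]; ring


lemma stein_key1 {a b : EReal} {g : ℝ → ℝ} {w₀ c₁ : ℝ}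
    (hw₀ : w₀ ∈ strip a b) (hc₁ : 0 < c₁) (hg_cont : ContinuousOn g (strip a b))
    (hg_mono : MonotoneOn g (strip a b))
    (hnorm : ∫ y in strip a b, steinPdf g w₀ c₁ y = 1)
    {w : ℝ} (hw : w ∈ strip a b) :
    -(steinPdf g w₀ c₁ w) ≤ g w * steinCDF g a b w₀ c₁ w := by
  rcases le_or_gt 0 (g w) with hgw | hgw
  · have h1 : 0 ≤ g w * steinCDF g a b w₀ c₁ w :=
      mul_nonneg hgw (steinCDF_nonneg hc₁ w)
    linarith [steinPdf_pos hc₁ w (g := g) (w₀ := w₀)]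
  · apply le_of_forall_pos_le_add
    intro ε hε
    obtain ⟨y, hy, hyw, hFy⟩ := exists_cdf_small hc₁ hnorm hw
      (show (0:ℝ) < ε / (-(g w)) from div_pos hε (by linarith))
    have hsub : Set.uIcc y w ⊆ strip a b := (strip_ordConnected a b).uIcc_subset hy hw
    have hpc := steinPdf_contOn hw₀ hg_cont (c₁ := c₁)
    -- F w = F y + ∫ y..w p
    have hF : steinCDF g a b w₀ c₁ w
        = steinCDF g a b w₀ c₁ y + ∫ t in y..w, steinPdf g w₀ c₁ t :=
      steinCDF_sub hnorm hy hw hyw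
    -- ∫ y..w g·p ≤ g w · ∫ y..w p
    have hmono_int : ∫ t in y..w, g t * steinPdf g w₀ c₁ t
        ≤ ∫ t in y..w, g w * steinPdf g w₀ c₁ t := by
      apply intervalIntegral.integral_mono_on hyw
      · exact (((hg_cont.mono hsub)).mul (hpc.mono hsub)).intervalIntegrable
      · exact ((continuousOn_const).mul (hpc.mono hsub)).intervalIntegrable
      · intro t ht
        have htS : t ∈ strip a b := hsub (by rw [Set.uIcc_of_le hyw]; exact ht)
        exact mul_le_mul_of_nonneg_right (hg_mono htS hw ht.2) (steinPdf_pos hc₁ t).le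
    rw [intervalIntegral.integral_const_mul] at hmono_int
    have hgp := integral_g_mul_pdf hw₀ hg_cont hy hw (c₁ := c₁)
    have hpy := steinPdf_pos hc₁ y (g := g) (w₀ := w₀)
    have hFy' : g w * steinCDF g a b w₀ c₁ y ≥ -ε := by
      have h1 := mul_le_mul_of_nonpos_left hFy hgw.le
      have h2 : g w * (ε / -(g w)) = -ε := by
        have hne : g w ≠ 0 := hgw.ne
        rw [div_neg, mul_neg, mul_comm, div_mul_cancel₀ _ hne]
      linarith
    have h3 : g w * steinCDF g a b w₀ c₁ w
        = g w * steinCDF g a b w₀ c₁ y + g w * ∫ t in y..w, steinPdf g w₀ c₁ t := by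
      rw [hF]; ring
    linarith


lemma stein_key2 {a b : EReal} {g : ℝ → ℝ} {w₀ c₁ : ℝ}
    (hw₀ : w₀ ∈ strip a b) (hc₁ : 0 < c₁) (hg_cont : ContinuousOn g (strip a b))
    (hg_mono : MonotoneOn g (strip a b))
    (hnorm : ∫ y in strip a b, steinPdf g w₀ c₁ y = 1)
    {w : ℝ} (hw : w ∈ strip a b) :
    g w * (1 - steinCDF g a b w₀ c₁ w) ≤ steinPdf g w₀ c₁ w := by
  rcases le_or_gt (g w) 0 with hgw | hgw
  · have h1 : g w * (1 - steinCDF g a b w₀ c₁ w) ≤ 0 :=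
      mul_nonpos_of_nonpos_of_nonneg hgw (by linarith [steinCDF_le_one hc₁ hnorm w])
    linarith [steinPdf_pos hc₁ w (g := g) (w₀ := w₀)]
  · apply le_of_forall_pos_le_add
    intro ε hε
    obtain ⟨y, hy, hwy, hFy⟩ := exists_cdf_big hc₁ hnorm hw
      (show (0:ℝ) < ε / g w from div_pos hε hgw)
    have hsub : Set.uIcc w y ⊆ strip a b := (strip_ordConnected a b).uIcc_subset hw hy
    have hpc := steinPdf_contOn hw₀ hg_cont (c₁ := c₁)
    have hF : steinCDF g a b w₀ c₁ y
        = steinCDF g a b w₀ c₁ w + ∫ t in w..y, steinPdf g w₀ c₁ t :=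
      steinCDF_sub hnorm hw hy hwy
    have hmono_int : ∫ t in w..y, g w * steinPdf g w₀ c₁ t
        ≤ ∫ t in w..y, g t * steinPdf g w₀ c₁ t := by
      apply intervalIntegral.integral_mono_on hwy
      · exact ((continuousOn_const).mul (hpc.mono hsub)).intervalIntegrable
      · exact (((hg_cont.mono hsub)).mul (hpc.mono hsub)).intervalIntegrable
      · intro t ht
        have htS : t ∈ strip a b := hsub (by rw [Set.uIcc_of_le hwy]; exact ht)
        exact mul_le_mul_of_nonneg_right (hg_mono hw htS ht.1) (steinPdf_pos hc₁ t).le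
    rw [intervalIntegral.integral_const_mul] at hmono_int
    have hgp := integral_g_mul_pdf hw₀ hg_cont hw hy (c₁ := c₁)
    have hpy := steinPdf_pos hc₁ y (g := g) (w₀ := w₀)
    have hFy' : g w * (1 - steinCDF g a b w₀ c₁ y) ≤ ε := by
      have h1 : 1 - steinCDF g a b w₀ c₁ y ≤ ε / g w := by linarith
      have h2 := mul_le_mul_of_nonneg_left h1 hgw.le
      have h3 : g w * (ε / g w) = ε := by
        rw [mul_comm, div_mul_cancel₀ _ hgw.ne']
      linarith
    have h3 : g w * (1 - steinCDF g a b w₀ c₁ w)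
        = g w * (1 - steinCDF g a b w₀ c₁ y) + g w * ∫ t in w..y, steinPdf g w₀ c₁ t := by
      rw [hF]; ring
    linarith


/-- Lemma 4.1, (4.4): `|f_z'(w)| ≤ 1` wherever `f_z` is differentiable (w ≠ z). -/
theorem steinSol_deriv_le_one
    (a b : EReal) (hab : a < b) (g : ℝ → ℝ) (w₀ c₁ : ℝ)
    (hw₀ : w₀ ∈ strip a b) (hc₁ : 0 < c₁)
    (hnorm : ∫ y in strip a b, steinPdf g w₀ c₁ y = 1)
    -- condition (A1)
    (hg_mono : MonotoneOn g (strip a b))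
    (hg_sign : ∀ w ∈ strip a b, 0 ≤ (w - w₀) * g w)
    -- condition (A2)
    (hg_diff : ∀ w ∈ strip a b, DifferentiableAt ℝ g w)
    (hg'_diff : ∀ w ∈ strip a b, DifferentiableAt ℝ (deriv g) w)
    (hg'_cont : ContinuousOn (deriv g) (strip a b))
    (hg_ineq : ∀ w ∈ strip a b, 0 ≤ 2 * (deriv g w) ^ 2 - g w * deriv (deriv g) w)
    -- condition (A3)
    (hlim_a : Tendsto (fun y => g y * steinPdf g w₀ c₁ y)
      (Filter.comap (fun x : ℝ => (x : EReal)) (nhdsWithin a (Set.Ioi a))) (nhds 0))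
    (hlim_b : Tendsto (fun y => g y * steinPdf g w₀ c₁ y)
      (Filter.comap (fun x : ℝ => (x : EReal)) (nhdsWithin b (Set.Iio b))) (nhds 0))
    (z : ℝ) (hz : z ∈ strip a b) :
    ∀ w ∈ strip a b, w ≠ z → |deriv (steinSol g a b w₀ c₁ z) w| ≤ 1 := by
  intro w hw hwz
  have hg_cont : ContinuousOn g (strip a b) :=
    fun x hx => ((hg_diff x hx).continuousAt).continuousWithinAt
  set F := steinCDF g a b w₀ c₁ with hFdef
  set p := steinPdf g w₀ c₁ with hpdef
  have hP : 0 < p w := steinPdf_pos hc₁ w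
  have hPz : p w ≠ 0 := hP.ne'
  have hFw0 : 0 ≤ F w := steinCDF_nonneg hc₁ w
  have hFz0 : 0 ≤ F z := steinCDF_nonneg hc₁ z
  have hFw1 : F w ≤ 1 := steinCDF_le_one hc₁ hnorm w
  have hFz1 : F z ≤ 1 := steinCDF_le_one hc₁ hnorm z
  have hkey1 : -(p w) ≤ g w * F w := stein_key1 hw₀ hc₁ hg_cont hg_mono hnorm hw
  have hkey2 : g w * (1 - F w) ≤ p w := stein_key2 hw₀ hc₁ hg_cont hg_mono hnorm hw
  have hdF : HasDerivAt F (p w) w := steinCDF_hasDerivAt hw₀ hg_cont hnorm hw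
  have hdp : HasDerivAt p (-(g w) * p w) w := steinPdf_hasDerivAt hw₀ hg_cont hw
  rcases lt_or_gt_of_ne hwz with hlt | hgt
  · -- w < z
    have hFwz : F w ≤ F z := steinCDF_mono hc₁ hnorm hlt.le
    have hφ : HasDerivAt (fun u => F u * (1 - F z) / p u)
        ((p w * (1 - F z) * p w - F w * (1 - F z) * (-(g w) * p w)) / p w ^ 2) w :=
      (hdF.mul_const _).div hdp hPz
    have heq : steinSol g a b w₀ c₁ z =ᶠ[nhds w] fun u => F u * (1 - F z) / p u := by
      filter_upwards [Iio_mem_nhds hlt] with u hu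
      simp only [steinSol, if_pos (Set.mem_Iio.1 hu).le]
      rfl
    rw [heq.deriv_eq, hφ.deriv]
    have hVeq : (p w * (1 - F z) * p w - F w * (1 - F z) * (-(g w) * p w)) / p w ^ 2
        = (1 - F z) * (p w + g w * F w) / p w := by
      field_simp
      ring
    rw [hVeq, abs_div, abs_of_pos hP, div_le_one hP, abs_le]
    constructor
    · have h1 : 0 ≤ (1 - F z) * (p w + g w * F w) :=
        mul_nonneg (by linarith) (by linarith)
      linarith
    · rcases le_or_gt (g w) 0 with hgw | hgw
      · have h1 : g w * F w ≤ 0 := mul_nonpos_of_nonpos_of_nonneg hgw hFw0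
        nlinarith
      · have h1 : g w * (F w * (1 - F z)) ≤ g w * (F z * (1 - F w)) :=
          mul_le_mul_of_nonneg_left (by nlinarith) hgw.le
        have h2 : F z * (g w * (1 - F w)) ≤ F z * p w :=
          mul_le_mul_of_nonneg_left hkey2 hFz0
        nlinarith
  · -- z < w
    have hFzw : F z ≤ F w := steinCDF_mono hc₁ hnorm hgt.le
    have hφ : HasDerivAt (fun u => F z * (1 - F u) / p u)
        ((F z * (0 - p w) * p w - F z * (1 - F w) * (-(g w) * p w)) / p w ^ 2) w := by
      have hnum : HasDerivAt (fun u => F z * (1 - F u)) (F z * (0 - p w)) w :=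
        ((hasDerivAt_const w (1:ℝ)).sub hdF).const_mul (F z)
      exact hnum.div hdp hPz
    have heq : steinSol g a b w₀ c₁ z =ᶠ[nhds w] fun u => F z * (1 - F u) / p u := by
      filter_upwards [Ioi_mem_nhds hgt] with u hu
      simp only [steinSol, if_neg (not_le.2 (Set.mem_Ioi.1 hu))]
      rfl
    rw [heq.deriv_eq, hφ.deriv]
    have hVeq : (F z * (0 - p w) * p w - F z * (1 - F w) * (-(g w) * p w)) / p w ^ 2
        = F z * (g w * (1 - F w) - p w) / p w := by
      field_simp
      ring
    rw [hVeq, abs_div, abs_of_pos hP, div_le_one hP, abs_le]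
    constructor
    · rcases le_or_gt 0 (g w) with hgw | hgw
      · have h1 : 0 ≤ g w * (1 - F w) := mul_nonneg hgw (by linarith)
        nlinarith
      · have h1 : (-(g w)) * (F z * (1 - F w)) ≤ (-(g w)) * (F w * (1 - F z)) :=
          mul_le_mul_of_nonneg_left (by nlinarith) (by linarith)
        have h2 : (1 - F z) * (-(g w * F w)) ≤ (1 - F z) * p w :=
          mul_le_mul_of_nonneg_left (by linarith) (by linarith)
        nlinarith
    · have h1 : F z * (g w * (1 - F w) - p w) ≤ 0 :=
        mul_nonpos_of_nonneg_of_nonpos hFz0 (by linarith)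
      linarith
end
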